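/- Let B be a self-adjoint operator with spectral measure E on a Hilbert space H, and let x ∈ H. If ω(t) = t^α for some α > 0 and the best approximation satisfies E_r(x,B) = O(r^{-α}) as r → ∞, then for k > α (k ∈ ℕ) the modulus of continuity satisfies ω_k(t, x, B) = O(t^α) as t → 0⁺. -/

import Mathlib

open MeasureTheory Complex Set Real

open MeasureTheory Complex Set Real

lemma aux_exp_norm_le (θ : ℝ) : ‖Complex.exp (Complex.I * θ) - 1‖ ≤ |θ| := by
  have h : Complex.exp (Complex.I * θ) - 1
      = Complex.ofReal (Real.cos θ - 1) + Complex.ofReal (Real.sin θ) * Complex.I := by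
    rw [mul_comm, Complex.exp_mul_I]
    push_cast [Complex.ofReal_cos, Complex.ofReal_sin]
    ring
  rw [h]
  rw [Complex.norm_add_mul_I]
  rw [show |θ| = Real.sqrt (θ ^ 2) by rw [Real.sqrt_sq_eq_abs]]
  apply Real.sqrt_le_sqrt
  nlinarith [Real.sin_sq_add_cos_sq θ, Real.one_sub_sq_div_two_le_cos (x := θ)]

lemma aux_exp_norm_le_two (θ : ℝ) : ‖Complex.exp (Complex.I * θ) - 1‖ ≤ 2 := by
  calc ‖Complex.exp (Complex.I * θ) - 1‖ ≤ ‖Complex.exp (Complex.I * θ)‖ + ‖(1:ℂ)‖ :=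
        norm_sub_le _ _
  _ ≤ 2 := by
      rw [mul_comm]
      rw [Complex.norm_exp_ofReal_mul_I]
      norm_num

lemma aux_eLpNorm_le {X : Type*} [MeasurableSpace X] {μ : Measure X} (f g : X → ℂ) (c : ℝ)
    (hc : 0 ≤ c) (h : ∀ s, ‖f s‖ ≤ c * ‖g s‖) :
    eLpNorm f 2 μ ≤ ENNReal.ofReal c * eLpNorm g 2 μ := by
  calc eLpNorm f 2 μ ≤ eLpNorm (c • g) 2 μ := by
        apply eLpNorm_mono
        intro s
        simpa [norm_smul, _root_.abs_of_nonneg hc] using h s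
  _ = (‖c‖ₑ : ENNReal) * eLpNorm g 2 μ := by
        rw [eLpNorm_const_smul]
  _ = ENNReal.ofReal c * eLpNorm g 2 μ := by rw [Real.enorm_eq_ofReal hc]
lemma aux_real_bound (α C₁ R Mx t : ℝ) (k L : ℕ) (hα : 0 < α) (hkα : α < k)
    (hR : 0 < R) (hC : 1 ≤ C₁) (hMx : 0 ≤ Mx) (ht : 0 < t) (ht1 : t ≤ 1)
    (hL1 : (2:ℝ)^L ≤ 1/(t*R)) (hL2 : 1/(t*R) < 2^(L+1)) :
    (t*R)^k * Mx
      + ∑ j ∈ Finset.range L, (t * (R * 2^(j+1)))^k * (C₁ * (R * 2^j) ^ (-α))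
      + 2^k * (C₁ * (R * 2^L) ^ (-α))
    ≤ (R^k * Mx + 2^k * C₁ / ((2:ℝ)^((k:ℝ)-α) - 1) + 2^k * 2^α * C₁) * t^α := by
  set q : ℝ := (2:ℝ)^((k:ℝ)-α) with hq
  have hkαR : (0:ℝ) < (k:ℝ) - α := by
    have : α < (k:ℝ) := hkα
    linarith
  have hq1 : 1 < q := by
    rw [hq]
    exact (Real.one_lt_rpow_iff_of_pos two_pos).2 (Or.inl ⟨one_lt_two, hkαR⟩)
  have hqpos : 0 < q - 1 := by linarith
  have htR : 0 < t * R := mul_pos ht hR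
  -- Term 1
  have hterm1 : (t*R)^k * Mx ≤ R^k * Mx * t^α := by
    have h1 : (t:ℝ)^k ≤ t^α := by
      rw [← Real.rpow_natCast t k]
      exact Real.rpow_le_rpow_of_exponent_ge ht ht1 hkα.le
    calc (t*R)^k * Mx = t^k * (R^k * Mx) := by rw [mul_pow]; ring
    _ ≤ t^α * (R^k * Mx) := by
        apply mul_le_mul_of_nonneg_right h1 (by positivity)
    _ = R^k * Mx * t^α := by ring
  -- Term 2 : the geometric sum
  have hterm2 : ∑ j ∈ Finset.range L, (t * (R * 2^(j+1)))^k * (C₁ * (R * 2^j) ^ (-α))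
      ≤ 2^k * C₁ / (q - 1) * t^α := by
    set A : ℝ := (2*t*R)^k * (C₁ * R^(-α)) with hA
    have hApos : 0 ≤ A := by
      have : (0:ℝ) < R^(-α) := Real.rpow_pos_of_pos hR _
      positivity
    have hterm : ∀ j, (t * (R * 2^(j+1)))^k * (C₁ * (R * 2^j) ^ (-α)) = A * q^j := by
      intro j
      have e1 : (t * (R * 2^(j+1)))^k = (2*t*R)^k * ((2:ℝ)^j)^k := by
        rw [← mul_pow]; ring_nf
      have e2 : (R * (2:ℝ)^j) ^ (-α) = R^(-α) * ((2:ℝ)^j)^(-α) :=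
        Real.mul_rpow hR.le (by positivity)
      have e3 : ((2:ℝ)^j)^k * ((2:ℝ)^j)^(-α) = q^j := by
        rw [← Real.rpow_natCast ((2:ℝ)^j) k, ← Real.rpow_add (by positivity)]
        rw [← Real.rpow_natCast (2:ℝ) j, ← Real.rpow_mul two_pos.le,
          mul_comm ((j:ℝ)) _, Real.rpow_mul two_pos.le, Real.rpow_natCast,
          show (k:ℝ) + -α = (k:ℝ) - α by ring]
      rw [e1, e2]
      calc (2*t*R)^k * ((2:ℝ)^j)^k * (C₁ * (R^(-α) * ((2:ℝ)^j)^(-α)))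
          = ((2*t*R)^k * (C₁ * R^(-α))) * (((2:ℝ)^j)^k * ((2:ℝ)^j)^(-α)) := by ring
      _ = A * q^j := by rw [e3]
    have hqL : q^L ≤ (t*R)^(α-(k:ℝ)) := by
      have e4 : q^L = ((2:ℝ)^L)^((k:ℝ)-α) := by
        rw [← Real.rpow_natCast ((2:ℝ)) L, ← Real.rpow_mul two_pos.le,
          mul_comm ((L:ℝ)) _, Real.rpow_mul two_pos.le, Real.rpow_natCast]
      have e5 : ((2:ℝ)^L : ℝ)^((k:ℝ)-α) ≤ (1/(t*R))^((k:ℝ)-α) :=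
        Real.rpow_le_rpow (by positivity) hL1 hkαR.le
      have e6 : (1/(t*R))^((k:ℝ)-α) = (t*R)^(α-(k:ℝ)) := by
        rw [one_div, Real.inv_rpow htR.le, ← Real.rpow_neg htR.le, neg_sub]
      rw [e4]; rw [e6] at e5; exact e5
    have hfin : A * ((t*R)^(α-(k:ℝ))) = 2^k * C₁ * t^α := by
      have h1 : (t*R)^k * (t*R)^(α-(k:ℝ)) = t^α * R^α := by
        rw [← Real.rpow_natCast (t*R) k, ← Real.rpow_add htR,
          show (k:ℝ) + (α - (k:ℝ)) = α by ring, Real.mul_rpow ht.le hR.le]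
      have h2 : R^α * R^(-α) = 1 := by
        rw [← Real.rpow_add hR]; simp
      calc A * ((t*R)^(α-(k:ℝ)))
          = 2^k * C₁ * ((t*R)^k * (t*R)^(α-(k:ℝ))) * R^(-α) := by
            rw [hA, show (2*t*R) = 2*(t*R) by ring, mul_pow]; ring
      _ = 2^k * C₁ * (t^α * R^α) * R^(-α) := by rw [h1]
      _ = 2^k * C₁ * t^α * (R^α * R^(-α)) := by ring
      _ = 2^k * C₁ * t^α := by rw [h2]; ring
    calc ∑ j ∈ Finset.range L, (t * (R * 2^(j+1)))^k * (C₁ * (R * 2^j) ^ (-α))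
        = A * ∑ j ∈ Finset.range L, q^j := by
          rw [Finset.mul_sum]; exact Finset.sum_congr rfl fun j _ => hterm j
    _ = A * ((q^L - 1)/(q-1)) := by rw [geom_sum_eq hq1.ne' L]
    _ ≤ A * (q^L/(q-1)) := by
        gcongr
        linarith
    _ ≤ A * ((t*R)^(α-(k:ℝ))/(q-1)) := by
        gcongr
    _ = (A * ((t*R)^(α-(k:ℝ))))/(q-1) := by ring
    _ = 2^k * C₁ * t^α / (q-1) := by rw [hfin]
    _ = 2^k * C₁ / (q - 1) * t^α := by ring
  -- Term 3
  have hterm3 : 2^k * (C₁ * (R * 2^L) ^ (-α)) ≤ 2^k * 2^α * C₁ * t^α := by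
    have h12t : (0:ℝ) < 1/(2*t) := by positivity
    have hle : 1/(2*t) ≤ R * 2^L := by
      have h1 : 1 < 2^(L+1) * (t*R) := by
        rw [div_lt_iff₀ htR] at hL2; linarith
      rw [div_le_iff₀ (by positivity)]
      calc (1:ℝ) ≤ 2^(L+1) * (t*R) := h1.le
      _ = R * 2^L * (2*t) := by rw [pow_succ]; ring
    have h2 : (R * 2^L) ^ (-α) ≤ (2*t)^α := by
      have h3 : (R * 2^L) ^ (-α) ≤ (1/(2*t)) ^ (-α) :=
        Real.rpow_le_rpow_of_nonpos h12t hle (neg_nonpos.2 hα.le)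
      have h4 : (1/(2*t)) ^ (-α) = (2*t)^α := by
        rw [one_div, Real.inv_rpow (by positivity), ← Real.rpow_neg (by positivity), neg_neg]
      rw [h4] at h3; exact h3
    calc 2^k * (C₁ * (R * 2^L) ^ (-α)) ≤ 2^k * (C₁ * ((2*t)^α)) := by
          gcongr
    _ = 2^k * 2^α * C₁ * t^α := by
        rw [Real.mul_rpow two_pos.le ht.le]; ring
  nlinarith [hterm1, hterm2, hterm3, Real.rpow_pos_of_pos ht α]

/-- Consequence of the inverse theorem for `ω(t) = t^α` (case `k > α`).  `B` is realized as
multiplication by the measurable function `b` on `L²(μ)`.  If the best approximation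
satisfies `E_r(x,B) = O(r^{-α})` as `r → ∞`, then for `k > α` one has
`ω_k(t,x,B) = O(t^α)` as `t → 0⁺`. -/
theorem inverse_consequence_k_gt_alpha {X : Type*} [MeasurableSpace X] (μ : Measure X)
    (b : X → ℝ) (hb : Measurable b)
    (x : X → ℂ) (hx : MemLp x 2 μ)
    (α : ℝ) (hα : 0 < α)
    (hE : ∃ C : ℝ, ∃ R > (0 : ℝ), ∀ r ≥ R,
      eLpNorm (fun s => if |b s| ≤ r then 0 else x s) 2 μ ≤ ENNReal.ofReal (C * r ^ (-α)))
    (k : ℕ) (hk : 1 ≤ k) (hkα : α < k) :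
    ∃ C' : ℝ, ∃ δ > (0 : ℝ), ∀ t : ℝ, 0 < t → t ≤ δ →
      (⨆ τ ∈ Ioc (0 : ℝ) t,
          eLpNorm (fun s => (Complex.exp (Complex.I * τ * b s) - 1) ^ k * x s) 2 μ)
        ≤ ENNReal.ofReal (C' * t ^ α) := by
  classical
  obtain ⟨C, R, hR, hC⟩ := hE
  set C₁ : ℝ := max C 1 with hC₁def
  have hC₁1 : 1 ≤ C₁ := le_max_right _ _
  have hC₁pos : (0:ℝ) < C₁ := lt_of_lt_of_le one_pos hC₁1
  have hC₁ : ∀ r, R ≤ r → eLpNorm (fun s => if |b s| ≤ r then 0 else x s) 2 μ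
      ≤ ENNReal.ofReal (C₁ * r ^ (-α)) := by
    intro r hr
    refine (hC r hr).trans (ENNReal.ofReal_le_ofReal ?_)
    have h0r : (0:ℝ) ≤ r := le_trans hR.le hr
    exact mul_le_mul_of_nonneg_right (le_max_left _ _) (Real.rpow_nonneg h0r _)
  set Mx := (eLpNorm x 2 μ).toReal with hMxdef
  have hMx0 : 0 ≤ Mx := ENNReal.toReal_nonneg
  have hMxE : eLpNorm x 2 μ = ENNReal.ofReal Mx :=
    (ENNReal.ofReal_toReal hx.eLpNorm_lt_top.ne).symm
  set q : ℝ := (2:ℝ)^((k:ℝ)-α) with hqdef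
  refine ⟨R^k * Mx + 2^k * C₁ / (q - 1) + 2^k * 2^α * C₁, min 1 (1/(2*R)), by positivity, ?_⟩
  intro t ht htδ
  have ht1 : t ≤ 1 := le_trans htδ (min_le_left _ _)
  have ht2R : t ≤ 1/(2*R) := le_trans htδ (min_le_right _ _)
  have htR : 0 < t * R := mul_pos ht hR
  have hu2 : (2:ℝ) ≤ 1/(t*R) := by
    rw [le_div_iff₀ htR]
    calc 2 * (t*R) ≤ 2 * ((1/(2*R)) * R) := by gcongr
    _ = 1 := by field_simp
  set m : ℕ := ⌊1/(t*R)⌋₊ with hmdef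
  set L : ℕ := Nat.log 2 m with hLdef
  have hm2 : 2 ≤ m := Nat.le_floor (by exact_mod_cast hu2)
  have hL1 : (2:ℝ)^L ≤ 1/(t*R) := by
    calc ((2:ℝ))^L = ((2^L : ℕ) : ℝ) := by push_cast; ring
    _ ≤ (m:ℝ) := by exact_mod_cast Nat.pow_log_le_self 2 (by omega)
    _ ≤ 1/(t*R) := Nat.floor_le (by positivity)
  have hL2 : 1/(t*R) < (2:ℝ)^(L+1) := by
    calc 1/(t*R) < (m:ℝ) + 1 := Nat.lt_floor_add_one _
    _ ≤ (2:ℝ)^(L+1) := by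
        have h : m + 1 ≤ 2^(L+1) := Nat.succ_le_of_lt (Nat.lt_pow_succ_log_self (by norm_num) m)
        exact_mod_cast h
  apply iSup₂_le
  intro τ hτ
  obtain ⟨hτ0, hτt⟩ := hτ
  set e : X → ℂ := fun s => (Complex.exp (Complex.I * τ * b s) - 1)^k with he_def
  set low : ℕ → X → ℂ := fun j s => if |b s| ≤ R * 2^j then x s else 0 with hlow_def
  -- norm bounds on e
  have he_norm : ∀ s, ‖Complex.exp (Complex.I * (τ:ℂ) * (b s : ℂ)) - 1‖ ≤ τ * |b s| := by
    intro s
    have hcast : Complex.I * (τ:ℂ) * (b s : ℂ) = Complex.I * ((τ * b s : ℝ) : ℂ) := by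
      push_cast; ring
    rw [hcast]
    calc ‖Complex.exp (Complex.I * ((τ * b s : ℝ) : ℂ)) - 1‖ ≤ |τ * b s| :=
          aux_exp_norm_le _
    _ = τ * |b s| := by rw [abs_mul, abs_of_pos hτ0]
  have he_le : ∀ s (c : ℝ), |b s| ≤ c → ‖e s‖ ≤ (t*c)^k := by
    intro s c hc
    rw [he_def]
    simp only [norm_pow]
    apply pow_le_pow_left₀ (norm_nonneg _)
    calc ‖Complex.exp (Complex.I * (τ:ℂ) * (b s : ℂ)) - 1‖ ≤ τ * |b s| := he_norm s
    _ ≤ t * c := mul_le_mul hτt hc (abs_nonneg _) ht.le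
  have he_two : ∀ s, ‖e s‖ ≤ 2^k := by
    intro s
    rw [he_def]
    simp only [norm_pow]
    apply pow_le_pow_left₀ (norm_nonneg _)
    have hcast : Complex.I * (τ:ℂ) * (b s : ℂ) = Complex.I * ((τ * b s : ℝ) : ℂ) := by
      push_cast; ring
    rw [hcast]
    exact aux_exp_norm_le_two _
  -- measurability
  have hem : AEStronglyMeasurable e μ := by
    apply Measurable.aestronglyMeasurable
    exact (((Complex.measurable_ofReal.comp hb).const_mul
      (Complex.I * (τ:ℂ))).cexp.sub measurable_const).pow_const k
  have hlowm : ∀ j : ℕ, AEStronglyMeasurable (low j) μ := by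
    intro j
    have hset : MeasurableSet {s : X | |b s| ≤ R * 2^j} :=
      measurableSet_le hb.abs measurable_const
    have hrew : low j = Set.indicator {s : X | |b s| ≤ R * 2^j} x := by
      funext s; simp [hlow_def, Set.indicator_apply]
    rw [hrew]
    exact hx.1.indicator hset
  have hTm : ∀ r : ℝ, AEStronglyMeasurable (fun s => if |b s| ≤ r then 0 else x s) μ := by
    intro r
    have hset : MeasurableSet {s : X | |b s| ≤ r} :=
      measurableSet_le hb.abs measurable_const
    have hrew : (fun s => if |b s| ≤ r then (0:ℂ) else x s)
        = Set.indicator {s : X | |b s| ≤ r}ᶜ x := by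
      funext s
      by_cases h : |b s| ≤ r <;> simp [Set.indicator_apply, h]
    rw [hrew]
    exact hx.1.indicator hset.compl
  -- pieces, triangle inequality
  have htri : eLpNorm (fun s => (Complex.exp (Complex.I * τ * b s) - 1) ^ k * x s) 2 μ
      ≤ eLpNorm (fun s => e s * low 0 s) 2 μ
        + ((∑ j ∈ Finset.range L,
            eLpNorm (fun s => e s * (low (j+1) s - low j s)) 2 μ)
          + eLpNorm (fun s => e s * (if |b s| ≤ R * 2^L then 0 else x s)) 2 μ) := by
    have hmid : AEStronglyMeasurable
        (fun s => ∑ j ∈ Finset.range L, e s * (low (j+1) s - low j s)) μ := by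
      apply Finset.aestronglyMeasurable_fun_sum
      intro j _
      exact hem.mul ((hlowm (j+1)).sub (hlowm j))
    have htail : AEStronglyMeasurable
        (fun s => e s * (if |b s| ≤ R * 2^L then 0 else x s)) μ :=
      hem.mul (hTm _)
    have hdecomp : (fun s => (Complex.exp (Complex.I * τ * b s) - 1) ^ k * x s)
        = (fun s => e s * low 0 s)
          + ((fun s => ∑ j ∈ Finset.range L, e s * (low (j+1) s - low j s))
            + (fun s => e s * (if |b s| ≤ R * 2^L then 0 else x s))) := by
      funext s
      simp only [Pi.add_apply]
      have tele : ∑ j ∈ Finset.range L, (e s * low (j+1) s - e s * low j s)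
          = e s * low L s - e s * low 0 s := Finset.sum_range_sub (fun j => e s * low j s) L
      have hsummand : ∀ j, e s * (low (j+1) s - low j s)
          = e s * low (j+1) s - e s * low j s := fun j => mul_sub _ _ _
      have hsplit : low L s + (if |b s| ≤ R * 2^L then (0:ℂ) else x s) = x s := by
        by_cases h : |b s| ≤ R * 2^L <;> simp [hlow_def, h]
      calc (Complex.exp (Complex.I * τ * b s) - 1) ^ k * x s
          = e s * (low L s + (if |b s| ≤ R * 2^L then (0:ℂ) else x s)) := by
            rw [hsplit, he_def]
      _ = e s * low 0 s + ((e s * low L s - e s * low 0 s)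
            + e s * (if |b s| ≤ R * 2^L then (0:ℂ) else x s)) := by ring
      _ = e s * low 0 s + ((∑ j ∈ Finset.range L, e s * (low (j+1) s - low j s))
            + e s * (if |b s| ≤ R * 2^L then (0:ℂ) else x s)) := by
            rw [show ∑ j ∈ Finset.range L, e s * (low (j+1) s - low j s)
              = e s * low L s - e s * low 0 s by
                rw [← tele]; exact Finset.sum_congr rfl fun j _ => hsummand j]
    rw [hdecomp]
    calc eLpNorm _ 2 μ
        ≤ eLpNorm (fun s => e s * low 0 s) 2 μ
          + eLpNorm ((fun s => ∑ j ∈ Finset.range L, e s * (low (j+1) s - low j s))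
            + (fun s => e s * (if |b s| ≤ R * 2^L then 0 else x s))) 2 μ :=
          eLpNorm_add_le (hem.mul (hlowm 0)) (hmid.add htail) one_le_two
    _ ≤ eLpNorm (fun s => e s * low 0 s) 2 μ
          + (eLpNorm (fun s => ∑ j ∈ Finset.range L, e s * (low (j+1) s - low j s)) 2 μ
            + eLpNorm (fun s => e s * (if |b s| ≤ R * 2^L then 0 else x s)) 2 μ) := by
          gcongr
          exact eLpNorm_add_le hmid htail one_le_two
    _ ≤ _ := by
          gcongr
          have hfs : (fun s => ∑ j ∈ Finset.range L, e s * (low (j+1) s - low j s))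
              = ∑ j ∈ Finset.range L, (fun s => e s * (low (j+1) s - low j s)) := by
            funext s; rw [Finset.sum_apply]
          rw [hfs]
          exact eLpNorm_sum_le (fun j _ => hem.mul ((hlowm (j+1)).sub (hlowm j))) one_le_two
  -- bounds for each piece
  have hb0 : eLpNorm (fun s => e s * low 0 s) 2 μ
      ≤ ENNReal.ofReal ((t*R)^k) * ENNReal.ofReal Mx := by
    rw [← hMxE]
    apply aux_eLpNorm_le _ _ _ (by positivity)
    intro s
    rw [norm_mul]
    by_cases h : |b s| ≤ R
    · have h1 : ‖e s‖ ≤ (t*R)^k := he_le s R h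
      have h2 : ‖low 0 s‖ = ‖x s‖ := by simp [hlow_def, h]
      rw [h2]
      exact mul_le_mul_of_nonneg_right h1 (norm_nonneg _)
    · have h2 : low 0 s = 0 := by simp [hlow_def, h]
      rw [h2]
      simp
      positivity
  have hbj : ∀ j ∈ Finset.range L,
      eLpNorm (fun s => e s * (low (j+1) s - low j s)) 2 μ
        ≤ ENNReal.ofReal ((t*(R*2^(j+1)))^k) * ENNReal.ofReal (C₁ * (R*2^j)^(-α)) := by
    intro j _
    have h2j : (1:ℝ) ≤ 2^j := one_le_pow₀ one_le_two
    have hRr : R ≤ R * 2^j := le_mul_of_one_le_right hR.le h2j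
    calc eLpNorm (fun s => e s * (low (j+1) s - low j s)) 2 μ
        ≤ ENNReal.ofReal ((t*(R*2^(j+1)))^k)
          * eLpNorm (fun s => if |b s| ≤ R * 2^j then 0 else x s) 2 μ := by
          apply aux_eLpNorm_le _ _ _ (by positivity)
          intro s
          by_cases h1 : |b s| ≤ R * 2^j
          · have h1' : |b s| ≤ R * 2^(j+1) := by
              refine le_trans h1 ?_
              have : (2:ℝ)^j ≤ 2^(j+1) := pow_le_pow_right₀ one_le_two (Nat.le_succ j)
              nlinarith
            simp [hlow_def, h1, h1']
          · by_cases h2 : |b s| ≤ R * 2^(j+1)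
            · have hE1 : ‖e s‖ ≤ (t*(R*2^(j+1)))^k := he_le s _ h2
              have hd : low (j+1) s - low j s = x s := by simp [hlow_def, h1, h2]
              rw [norm_mul, hd, if_neg h1]
              exact mul_le_mul_of_nonneg_right hE1 (norm_nonneg _)
            · have hd : low (j+1) s - low j s = 0 := by simp [hlow_def, h1, h2]
              rw [hd, mul_zero, norm_zero, if_neg h1]
              positivity
    _ ≤ ENNReal.ofReal ((t*(R*2^(j+1)))^k) * ENNReal.ofReal (C₁ * (R*2^j)^(-α)) := by
          gcongr
          exact hC₁ _ hRr
  have hbtail : eLpNorm (fun s => e s * (if |b s| ≤ R * 2^L then 0 else x s)) 2 μ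
      ≤ ENNReal.ofReal ((2:ℝ)^k) * ENNReal.ofReal (C₁ * (R*2^L)^(-α)) := by
    have h2L : (1:ℝ) ≤ 2^L := one_le_pow₀ one_le_two
    have hRr : R ≤ R * 2^L := le_mul_of_one_le_right hR.le h2L
    calc eLpNorm (fun s => e s * (if |b s| ≤ R * 2^L then 0 else x s)) 2 μ
        ≤ ENNReal.ofReal ((2:ℝ)^k)
          * eLpNorm (fun s => if |b s| ≤ R * 2^L then 0 else x s) 2 μ := by
          apply aux_eLpNorm_le _ _ _ (by positivity)
          intro s
          rw [norm_mul]
          exact mul_le_mul_of_nonneg_right (he_two s) (norm_nonneg _)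
    _ ≤ _ := by
          gcongr
          exact hC₁ _ hRr
  -- combine
  have hnn1 : (0:ℝ) ≤ (t*R)^k * Mx := by positivity
  have hterm_nn : ∀ j ∈ Finset.range L,
      (0:ℝ) ≤ (t*(R*2^(j+1)))^k * (C₁ * (R*2^j)^(-α)) := by
    intro j _
    have := Real.rpow_nonneg (by positivity : (0:ℝ) ≤ R*2^j) (-α)
    positivity
  have hnn3 : (0:ℝ) ≤ (2:ℝ)^k * (C₁ * (R*2^L)^(-α)) := by
    have := Real.rpow_nonneg (by positivity : (0:ℝ) ≤ R*2^L) (-α)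
    positivity
  calc eLpNorm (fun s => (Complex.exp (Complex.I * τ * b s) - 1) ^ k * x s) 2 μ
      ≤ ENNReal.ofReal ((t*R)^k) * ENNReal.ofReal Mx
        + ((∑ j ∈ Finset.range L,
            ENNReal.ofReal ((t*(R*2^(j+1)))^k) * ENNReal.ofReal (C₁ * (R*2^j)^(-α)))
          + ENNReal.ofReal ((2:ℝ)^k) * ENNReal.ofReal (C₁ * (R*2^L)^(-α))) := by
        refine htri.trans ?_
        exact add_le_add hb0 (add_le_add (Finset.sum_le_sum hbj) hbtail)
  _ = ENNReal.ofReal ((t*R)^k * Mx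
        + ((∑ j ∈ Finset.range L, (t*(R*2^(j+1)))^k * (C₁ * (R*2^j)^(-α)))
          + (2:ℝ)^k * (C₁ * (R*2^L)^(-α)))) := by
        rw [← ENNReal.ofReal_mul (by positivity), ← ENNReal.ofReal_mul (by positivity)]
        have hsum : ∑ j ∈ Finset.range L,
            ENNReal.ofReal ((t*(R*2^(j+1)))^k) * ENNReal.ofReal (C₁ * (R*2^j)^(-α))
            = ENNReal.ofReal (∑ j ∈ Finset.range L,
              (t*(R*2^(j+1)))^k * (C₁ * (R*2^j)^(-α))) := by
          rw [ENNReal.ofReal_sum_of_nonneg hterm_nn]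
          exact Finset.sum_congr rfl fun j _ => (ENNReal.ofReal_mul (by positivity)).symm
        rw [hsum, ← ENNReal.ofReal_add (Finset.sum_nonneg hterm_nn) hnn3,
          ← ENNReal.ofReal_add hnn1 (add_nonneg (Finset.sum_nonneg hterm_nn) hnn3)]
  _ ≤ ENNReal.ofReal ((R^k * Mx + 2^k * C₁ / (q - 1) + 2^k * 2^α * C₁) * t^α) := by
        apply ENNReal.ofReal_le_ofReal
        have hmain := aux_real_bound α C₁ R Mx t k L hα hkα hR hC₁1 hMx0 ht ht1 hL1 hL2
        linarith
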